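/- The identity B_1(θ)sin θ = 1 + (1/2)cos θ + Σ_{r=1}^∞ ((−1)^{r+1} B_{2r}(θ) + 2 cos θ) holds for all θ ∈ 𝕋, θ ≠ 0, where B_m are the Bernoulli kernels and the series converges absolutely and uniformly. -/

import Mathlib

set_option maxHeartbeats 1000000
open Complex Real Set

noncomputable def Bern (m : ℕ) (θ : ℝ) : ℂ :=
  if m = 1 then
    ((Real.pi - θ + 2 * Real.pi * (⌊θ / (2 * Real.pi)⌋ : ℤ) : ℝ) : ℂ)
  else
    ∑' k : ℤ, if k = 0 then 0 else Complex.exp (k * θ * Complex.I) / (Complex.I * k) ^ m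

-- integral of exp(m x I) over [0, 2π]
lemma integ_exp (m : ℤ) (hm : m ≠ 0) :
    ∫ x in (0:ℝ)..(2*π), Complex.exp (m*x*I) = 0 := by
  have h : ∀ x : ℝ, (m:ℂ)*x*I = ((m:ℂ)*I)*x := fun x => by ring
  simp_rw [h]
  rw [integral_exp_mul_complex (by simp [hm, Complex.I_ne_zero])]
  have : ((m:ℂ)*I) * ((2*π:ℝ):ℂ) = (m:ℤ) * (2*π*I) := by push_cast; ring
  rw [this, Complex.exp_int_mul_two_pi_mul_I]
  simp

lemma integ_xexp (m : ℤ) (hm : m ≠ 0) :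
    ∫ x in (0:ℝ)..(2*π), (x:ℂ) * Complex.exp (m*x*I) = 2*π/((m:ℂ)*I) := by
  have hmI : (m:ℂ)*I ≠ 0 := by simp [hm, Complex.I_ne_zero]
  have key : ∀ x ∈ Set.uIcc (0:ℝ) (2*π),
      HasDerivAt (fun x : ℝ => (x:ℂ) * Complex.exp (m*x*I) / ((m:ℂ)*I)
        - Complex.exp (m*x*I) / ((m:ℂ)*I)^2)
        ((x:ℂ) * Complex.exp (m*x*I)) x := by
    intro x _
    have he : HasDerivAt (fun x : ℝ => Complex.exp (m*x*I)) (((m:ℂ)*I) * Complex.exp (m*x*I)) x := by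
      have h1 : HasDerivAt (fun x : ℝ => (m:ℂ)*x*I) ((m:ℂ)*I) x := by
        simpa using ((Complex.ofRealCLM.hasDerivAt (x := x)).const_mul (m:ℂ)).mul_const I
      simpa [mul_comm] using h1.cexp
    have hx : HasDerivAt (fun x : ℝ => (x:ℂ)) 1 x := Complex.ofRealCLM.hasDerivAt
    have := ((hx.mul he).div_const ((m:ℂ)*I)).sub (he.div_const (((m:ℂ)*I)^2))
    convert this using 1
    · rfl
    · rfl
    field_simp
    ring
  rw [intervalIntegral.integral_eq_sub_of_hasDerivAt key ((Complex.continuous_ofReal.mul (by fun_prop)).intervalIntegrable _ _)]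
  have h2 : (m:ℂ) * ((2*π:ℝ):ℂ) * I = (m:ℤ) * (2*π*I) := by push_cast; ring
  simp only [Complex.ofReal_zero, mul_zero, zero_mul, Complex.exp_zero, h2,
    Complex.exp_int_mul_two_pi_mul_I]
  push_cast
  field_simp
  ring

lemma integ_J (m : ℤ) :
    ∫ x in (0:ℝ)..(2*π), (((π:ℝ):ℂ) - (x:ℂ)) * Complex.exp (m*x*I)
      = if m = 0 then 0 else 2*π*I/(m:ℂ) := by
  have hsplit : ∀ x : ℝ, (((π:ℝ):ℂ) - (x:ℂ)) * Complex.exp (m*x*I)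
      = ((π:ℝ):ℂ) * Complex.exp (m*x*I) - (x:ℂ) * Complex.exp (m*x*I) := fun x => by ring
  simp_rw [hsplit]
  rw [intervalIntegral.integral_sub
    (by apply Continuous.intervalIntegrable; fun_prop)
    (by apply Continuous.intervalIntegrable; fun_prop),
    intervalIntegral.integral_const_mul]
  rcases eq_or_ne m 0 with rfl | hm
  · simp only [Int.cast_zero, zero_mul, Complex.exp_zero, if_pos rfl, mul_one]
    have h1 : (∫ (_ : ℝ) in (0:ℝ)..(2*π), (1:ℂ)) = ((2*π : ℝ):ℂ) := by simp
    have h2 : ∫ x in (0:ℝ)..(2*π), (x:ℂ) = ((∫ x in (0:ℝ)..(2*π), x : ℝ) : ℂ) :=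
      intervalIntegral.integral_ofReal
    rw [h1, h2, integral_id]
    push_cast
    ring
  · rw [integ_exp m hm, integ_xexp m hm, if_neg hm]
    have hmc : (m:ℂ) ≠ 0 := Int.cast_ne_zero.mpr hm
    field_simp
    ring_nf
    rw [Complex.I_sq]
    ring

noncomputable def myf : ℝ → ℂ := fun x => (((π:ℝ):ℂ) - (x:ℂ)) * Complex.sin (x:ℂ)

noncomputable def myc : ℤ → ℂ := fun n =>
  if n = 0 then 1 else if n = 1 ∨ n = -1 then 1/4 else 1/(1 - (n:ℂ)^2)

lemma sin_expand (n : ℤ) (x : ℝ) :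
    Complex.exp (((-n:ℤ):ℂ)*x*I) * (myf x) =
      ((((π:ℝ):ℂ)-(x:ℂ)) * Complex.exp (((1-n:ℤ):ℂ)*x*I)
        - (((π:ℝ):ℂ)-(x:ℂ)) * Complex.exp (((-1-n:ℤ):ℂ)*x*I)) / (2*I) := by
  have e1 : Complex.exp (((1-n:ℤ):ℂ)*x*I)
      = Complex.exp ((x:ℂ)*I) * Complex.exp (((-n:ℤ):ℂ)*x*I) := by
    rw [← Complex.exp_add]; push_cast; ring_nf
  have e2 : Complex.exp (((-1-n:ℤ):ℂ)*x*I)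
      = Complex.exp (-(x:ℂ)*I) * Complex.exp (((-n:ℤ):ℂ)*x*I) := by
    rw [← Complex.exp_add]; push_cast; ring_nf
  rw [myf, Complex.sin, e1, e2]
  have : (I:ℂ) ≠ 0 := Complex.I_ne_zero
  field_simp
  ring_nf
  rw [Complex.I_sq]
  ring

instance fact_two_pi_pos : Fact (0 < 2*π) := ⟨by positivity⟩

lemma coeff_eq (n : ℤ) :
    fourierCoeff (AddCircle.liftIco (2*π) 0 myf) n = myc n := by
  rw [fourierCoeff_liftIco_eq, fourierCoeffOn_eq_integral]
  have hI : (I:ℂ) ≠ 0 := Complex.I_ne_zero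
  have hπ : ((π:ℝ):ℂ) ≠ 0 := by exact_mod_cast Real.pi_ne_zero
  have hinteg : (∫ x in (0:ℝ)..(0+2*π), (fourier (-n) (x : AddCircle (0+2*π-0)) : ℂ) • myf x)
      = ((∫ x in (0:ℝ)..(2*π), (((π:ℝ):ℂ)-(x:ℂ)) * Complex.exp (((1-n:ℤ):ℂ)*x*I))
        - ∫ x in (0:ℝ)..(2*π), (((π:ℝ):ℂ)-(x:ℂ)) * Complex.exp (((-1-n:ℤ):ℂ)*x*I)) / (2*I) := by
    rw [zero_add]
    rw [← intervalIntegral.integral_sub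
      (by apply Continuous.intervalIntegrable; fun_prop)
      (by apply Continuous.intervalIntegrable; fun_prop),
      ← intervalIntegral.integral_div]
    apply intervalIntegral.integral_congr
    intro x _
    simp only [smul_eq_mul, fourier_coe_apply]
    have hexp : 2 * (π:ℂ) * I * ((-n : ℤ):ℂ) * (x:ℂ) / (((2*π - 0 : ℝ)):ℂ)
        = ((-n:ℤ):ℂ)*x*I := by
      push_cast
      field_simp
      ring
    rw [hexp, sin_expand n x]
  rw [hinteg, integ_J, integ_J]
  rw [myc]
  rcases eq_or_ne n 0 with rfl | h0
  · norm_num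
    field_simp
    try ring
  rcases eq_or_ne n 1 with rfl | hone
  · norm_num
    field_simp
    ring
  rcases eq_or_ne n (-1) with rfl | hmone
  · norm_num
    field_simp
    ring
  · have h1 : (1 - n : ℤ) ≠ 0 := by omega
    have h2 : (-1 - n : ℤ) ≠ 0 := by omega
    rw [if_neg h1, if_neg h2, if_neg h0, if_neg (by simp [hone, hmone])]
    have hc1 : ((1:ℂ) - (n:ℂ)) ≠ 0 := by
      have := Int.cast_ne_zero (α := ℂ) |>.mpr h1
      push_cast at this
      exact this
    have hc2 : ((-1:ℂ) - (n:ℂ)) ≠ 0 := by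
      have := Int.cast_ne_zero (α := ℂ) |>.mpr h2
      push_cast at this
      exact this
    have hc3 : (1:ℂ) - (n:ℂ)^2 ≠ 0 := by
      have : (1:ℂ) - (n:ℂ)^2 = (1 - n) * -(-1 - n) := by ring
      rw [this]
      exact mul_ne_zero hc1 (neg_ne_zero.mpr hc2)
    rw [Complex.real_smul]
    push_cast
    field_simp
    ring

lemma myc_norm_le (n : ℤ) (hn : n ∉ ({0, 1, -1} : Finset ℤ)) :
    ‖myc n‖ ≤ 2/((n:ℝ))^2 := by
  simp only [Finset.mem_insert, Finset.mem_singleton, not_or] at hn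
  obtain ⟨h0, h1, h2⟩ := hn
  have h4 : (4:ℤ) ≤ n^2 := by
    rcases (by omega : 2 ≤ n ∨ n ≤ -2) with h | h <;> nlinarith
  have hsq : (4:ℝ) ≤ (n:ℝ)^2 := by exact_mod_cast h4
  rw [myc, if_neg h0, if_neg (by simp [h1, h2])]
  have : (1:ℂ) - (n:ℂ)^2 = (((1:ℝ) - (n:ℝ)^2 : ℝ) : ℂ) := by push_cast; ring
  rw [this, norm_div, Complex.norm_real, norm_one]
  rw [Real.norm_eq_abs, abs_of_nonpos (by nlinarith)]
  rw [div_le_div_iff₀ (by nlinarith) (by nlinarith)]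
  nlinarith

lemma myc_summable : Summable myc := by
  rw [← Finset.summable_compl_iff ({0, 1, -1} : Finset ℤ)]
  apply Summable.of_norm_bounded (g := fun k : {x // x ∉ ({0, 1, -1} : Finset ℤ)} => 2/((k:ℤ):ℝ)^2)
  · have : Summable (fun n : ℤ => 2 / ((n:ℝ))^2) := by
      have := ((Real.summable_one_div_int_pow (p := 2)).mpr one_lt_two).mul_left 2
      exact this.congr fun n => by rw [mul_one_div]
    exact this.subtype _
  · intro k
    exact myc_norm_le k k.2

lemma myf_cont : Continuous (AddCircle.liftIco (2*π) 0 myf) := by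
  apply AddCircle.liftIco_continuous
  · have h1 : myf (0 + 2*π) = 0 := by
      rw [myf, show ((0:ℝ) + 2*π : ℝ) = (2*π:ℝ) by ring, ← Complex.ofReal_sin, Real.sin_two_pi]
      simp
    have h0 : myf 0 = 0 := by
      rw [myf]
      simp
    rw [h0, h1]
  · exact ((continuous_const.sub Complex.continuous_ofReal).mul (by fun_prop)).continuousOn

lemma fourier_hasSum {θ : ℝ} (h1 : 0 ≤ θ) (h2 : θ < 2*π) :
    HasSum (fun n : ℤ => myc n * Complex.exp (n*θ*I))
      ((((π:ℝ):ℂ) - θ) * Complex.sin θ) := by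
  have hsummable : Summable (fourierCoeff (⇑(⟨_, myf_cont⟩ : C(AddCircle (2*π), ℂ)))) := by
    simp only [ContinuousMap.coe_mk]
    exact myc_summable.congr fun n => (coeff_eq n).symm
  have := has_pointwise_sum_fourier_series_of_summable hsummable (θ : AddCircle (2*π))
  simp only [ContinuousMap.coe_mk] at this
  rw [AddCircle.liftIco_coe_apply (by rw [zero_add]; exact ⟨h1, h2⟩)] at this
  convert this using 2 with n
  rw [coeff_eq, smul_eq_mul, fourier_coe_apply]
  congr 2
  have hπ : (π:ℂ) ≠ 0 := by exact_mod_cast Real.pi_ne_zero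
  push_cast
  field_simp
  ring
  · rw [myf]; ring

noncomputable def vv (r : ℕ) (θ : ℝ) : ℤ → ℂ :=
  fun k => Complex.exp (k*θ*Complex.I) / (k:ℂ)^(2*(r+1))

lemma vv_norm (r : ℕ) (θ : ℝ) (k : ℤ) (hk : k ≠ 0) :
    ‖vv r θ k‖ = ((1:ℝ)/((k:ℝ))^2)^(r+1) := by
  rw [vv, norm_div]
  have h1 : ((k:ℂ)*θ*Complex.I) = (((k*θ : ℝ)):ℂ) * Complex.I := by push_cast; ring
  rw [h1, Complex.norm_exp_ofReal_mul_I]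
  rw [norm_pow, Complex.norm_intCast]
  rw [one_div, ← inv_pow, div_pow, one_pow, pow_mul, ← Int.cast_abs]
  simp [Int.cast_abs, inv_pow, sq_abs]

lemma bern_eq (r : ℕ) (θ : ℝ) :
    Bern (2*(r+1)) θ = (-1:ℂ)^(r+1) * ∑' k : ℤ, vv r θ k := by
  rw [Bern, if_neg (by omega)]
  rw [← tsum_mul_left]
  congr 1
  ext k
  rcases eq_or_ne k 0 with rfl | hk
  · simp [vv]
  · rw [if_neg hk, vv]
    have h2 : (Complex.I * k)^(2*(r+1)) = (-1:ℂ)^(r+1) * (k:ℂ)^(2*(r+1)) := by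
      rw [mul_pow, pow_mul, Complex.I_sq]
    rw [h2]
    have hk2 : ((k:ℂ))^(2*(r+1)) ≠ 0 := pow_ne_zero _ (Int.cast_ne_zero.mpr hk)
    have hs : ((-1:ℂ))^(r+1) ≠ 0 := by
      apply pow_ne_zero; norm_num
    field_simp
    rcases Nat.even_or_odd (r+1) with he | ho
    · rw [he.neg_one_pow]; ring
    · rw [ho.neg_one_pow]; ring

lemma vv_summable (r : ℕ) (θ : ℝ) : Summable (vv r θ) := by
  apply Summable.of_norm_bounded (g := fun k : ℤ => 1/((k:ℝ))^2)
  · exact (Real.summable_one_div_int_pow (p := 2)).mpr one_lt_two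
  · intro k
    rcases eq_or_ne k 0 with rfl | hk
    · simp [vv]
    · rw [vv_norm r θ k hk]
      have h1 : (1:ℝ) ≤ |(k:ℝ)| := by
        rw [← Int.cast_abs]; exact_mod_cast Int.one_le_abs (by omega)
      have h2 : (1:ℝ) ≤ ((k:ℝ))^2 := by
        nlinarith [_root_.sq_abs ((k:ℝ)), mul_self_nonneg (|(k:ℝ)| - 1)]
      calc ((1:ℝ)/((k:ℝ))^2)^(r+1) ≤ ((1:ℝ)/((k:ℝ))^2)^1 := by
            apply pow_le_pow_of_le_one (by positivity) (by
              rw [div_le_one (by linarith)]; exact h2) (by omega)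
        _ = 1/((k:ℝ))^2 := pow_one _

abbrev SS : Finset ℤ := {0, 1, -1}

lemma sum_vv_s (r : ℕ) (θ : ℝ) :
    ∑ k ∈ SS, vv r θ k = 2 * Complex.cos (θ:ℂ) := by
  rw [show (SS : Finset ℤ) = {0, 1, -1} from rfl]
  rw [Finset.sum_insert (by decide), Finset.sum_insert (by decide), Finset.sum_singleton]
  simp only [vv, Int.cast_zero, Int.cast_one, Int.cast_neg]
  rw [zero_pow (by omega), div_zero, one_pow, div_one]
  have hpow : ((-1:ℂ))^(2*(r+1)) = 1 := by
    rw [pow_mul]; norm_num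
  rw [hpow, div_one, Complex.cos]
  ring_nf

lemma T_hasSum (r : ℕ) (θ : ℝ) :
    HasSum (fun k : {k : ℤ // k ∉ SS} => -(vv r θ k))
      ((-1:ℂ)^(r+2) * Bern (2*(r+1)) θ + 2*Complex.cos (θ:ℂ)) := by
  have h2 : HasSum (fun k : {k : ℤ // k ∉ SS} => vv r θ k)
      ((∑' k, vv r θ k) - 2*Complex.cos (θ:ℂ)) := by
    apply (Finset.hasSum_compl_iff SS).mpr
    rw [sum_vv_s, sub_add_cancel]
    exact (vv_summable r θ).hasSum
  have h3 := h2.neg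
  convert h3 using 1
  · rfl
  rw [bern_eq]
  have hsgn : (-1:ℂ)^(r+2) * (-1:ℂ)^(r+1) = -1 := by
    rw [← pow_add, show r+2+(r+1) = 2*(r+1)+1 by omega, pow_succ, pow_mul]
    norm_num
  rw [← mul_assoc, hsgn]
  ring

lemma geom_hasSum (θ : ℝ) (k : ℤ) (hk : k ∉ SS) :
    HasSum (fun r : ℕ => -(vv r θ k))
      (Complex.exp ((k:ℂ)*θ*Complex.I)/(1 - (k:ℂ)^2)) := by
  simp only [Finset.mem_insert, Finset.mem_singleton, not_or] at hk
  obtain ⟨h0, h1, hm1⟩ := hk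
  have hk2 : (2:ℤ) ≤ |k| := by rcases abs_cases k with ⟨h,_⟩|⟨h,_⟩ <;> omega
  have hkR : (2:ℝ) ≤ |(k:ℝ)| := by rw [← Int.cast_abs]; exact_mod_cast hk2
  have hknorm : ‖(k:ℂ)‖ = |(k:ℝ)| := by
    rw [show ((k:ℤ):ℂ) = (((k:ℝ)):ℂ) by push_cast; rfl, Complex.norm_real, Real.norm_eq_abs]
  have hxlt : ‖(((k:ℂ))^2)⁻¹‖ < 1 := by
    rw [norm_inv, norm_pow, hknorm]
    rw [inv_lt_one_iff₀]
    right
    nlinarith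
  have hc0 : (k:ℂ) ≠ 0 := Int.cast_ne_zero.mpr h0
  have hc2 : ((k:ℂ))^2 ≠ 0 := pow_ne_zero _ hc0
  have hc3 : (1:ℂ) - ((k:ℂ))^2 ≠ 0 := by
    intro h
    have h5 : ((k:ℂ))^2 = 1 := by linear_combination -h
    have h6 : ((k:ℤ))^2 = 1 := by exact_mod_cast h5
    rcases (by omega : 2 ≤ k ∨ k ≤ -2) with h7 | h7 <;> nlinarith
  have hgeo := (hasSum_geometric_of_norm_lt_one hxlt).mul_left
    (-(Complex.exp ((k:ℂ)*θ*Complex.I)) * (((k:ℂ))^2)⁻¹)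
  convert hgeo using 1
  · rfl
  · funext r
    simp only [vv]
    ring
  · have h9 : (-(k:ℂ)^2 + (k:ℂ)^4) ≠ 0 := by
      have h10 : (-(k:ℂ)^2 + (k:ℂ)^4) = ((k:ℂ)^2) * (-(1 - (k:ℂ)^2)) := by ring
      rw [h10]
      exact mul_ne_zero hc2 (neg_ne_zero.mpr hc3)
    have h : ((k:ℂ)^2) * (1-((k:ℂ)^2)⁻¹) = -(1-(k:ℂ)^2) := by
      rw [mul_sub, mul_one, mul_inv_cancel₀ hc2]; ring
    rw [mul_assoc (-cexp _), ← mul_inv, h, inv_neg]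
    ring

lemma ksq_ge (k : ℤ) (hk : k ∉ SS) : (4:ℝ) ≤ ((k:ℝ))^2 := by
  simp only [Finset.mem_insert, Finset.mem_singleton, not_or] at hk
  obtain ⟨h0, h1, hm1⟩ := hk
  have h4 : (4:ℤ) ≤ k^2 := by
    rcases (by omega : 2 ≤ k ∨ k ≤ -2) with h | h <;> nlinarith
  exact_mod_cast h4

lemma geom_norm_hasSum (θ : ℝ) (k : ℤ) (hk : k ∉ SS) :
    HasSum (fun r : ℕ => ‖-(vv r θ k)‖)
      ((1/((k:ℝ))^2) / (1 - 1/((k:ℝ))^2)) := by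
  have hk0 : k ≠ 0 := by
    intro h; subst h; simp at hk
  have hk4 := ksq_ge k hk
  set q : ℝ := 1/((k:ℝ))^2 with hq
  have hq0 : 0 ≤ q := by positivity
  have hq1 : q < 1 := by
    rw [hq, div_lt_one (by nlinarith)]; nlinarith
  have hgeo := (hasSum_geometric_of_lt_one hq0 hq1).mul_left q
  have : (fun r : ℕ => ‖-(vv r θ k)‖) = fun r : ℕ => q * q^r := by
    funext r
    rw [norm_neg, vv_norm r θ k hk0, ← hq, pow_succ]
    ring
  rw [this]
  convert hgeo using 1
  · rfl
  · exact div_eq_mul_inv _ _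

lemma prod_norm_summable (θ : ℝ) :
    Summable (fun p : {k : ℤ // k ∉ SS} × ℕ => ‖-(vv p.2 θ (p.1 : ℤ))‖) := by
  rw [summable_prod_of_nonneg (fun p => norm_nonneg _)]
  constructor
  · intro k
    exact (geom_norm_hasSum θ k k.2).summable
  · have hs : Summable (fun k : {k : ℤ // k ∉ SS} => 2 / (((k:ℤ):ℝ))^2) := by
      have hs0 : Summable (fun n : ℤ => 2 / ((n:ℝ))^2) := by
        have := ((Real.summable_one_div_int_pow (p := 2)).mpr one_lt_two).mul_left 2
        exact this.congr fun n => by rw [mul_one_div]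
      exact hs0.subtype _
    apply Summable.of_nonneg_of_le (fun k => tsum_nonneg fun r => norm_nonneg _) _ hs
    intro k
    rw [(geom_norm_hasSum θ k k.2).tsum_eq]
    have hk4 := ksq_ge k k.2
    set x : ℝ := (((k:ℤ):ℝ))^2 with hxdef
    have hx0 : 0 < x := by nlinarith
    have h1x : 0 < 1 - 1/x := by
      rw [sub_pos, div_lt_one hx0]; nlinarith
    rw [div_le_div_iff₀ h1x hx0]
    have h2x : 2/x ≤ 1 := by rw [div_le_one hx0]; nlinarith
    have hxx : (1/x) * x = 1 := by field_simp
    nlinarith [hxx, h2x, mul_pos hx0 h1x]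

lemma main_hasSum {θ : ℝ} (h1 : 0 < θ) (h2 : θ < 2*π) :
    HasSum (fun r : ℕ => (-1:ℂ)^(r+2) * Bern (2*(r+1)) θ + 2*Complex.cos (θ:ℂ))
      ((((π:ℝ):ℂ) - θ) * Complex.sin θ - (1 + (1/2)*Complex.cos (θ:ℂ))) := by
  set w : {k : ℤ // k ∉ SS} × ℕ → ℂ := fun p => -(vv p.2 θ (p.1:ℤ)) with hw
  have hwsum : Summable w := Summable.of_norm (prod_norm_summable θ)
  have hk_fiber : HasSum (fun k : {k : ℤ // k ∉ SS} =>
      Complex.exp (((k:ℤ):ℂ)*θ*Complex.I)/(1 - ((k:ℤ):ℂ)^2)) (∑' p, w p) :=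
    HasSum.prod_fiberwise hwsum.hasSum (fun k => geom_hasSum θ k k.2)
  -- Fourier side restricted to the complement of SS
  have hf2 : HasSum (fun k : {k : ℤ // k ∉ SS} => myc k * Complex.exp (((k:ℤ):ℂ)*θ*Complex.I))
      ((((π:ℝ):ℂ)-θ)*Complex.sin θ - (1 + (1/2)*Complex.cos (θ:ℂ))) := by
    apply (Finset.hasSum_compl_iff
      (f := fun n : ℤ => myc n * Complex.exp ((n:ℂ)*θ*Complex.I)) SS).mpr
    have hsum_SS : ∑ k ∈ SS, myc k * Complex.exp ((k:ℂ)*θ*Complex.I)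
        = 1 + (1/2)*Complex.cos (θ:ℂ) := by
      rw [show (SS : Finset ℤ) = {0, 1, -1} from rfl]
      rw [Finset.sum_insert (by decide), Finset.sum_insert (by decide), Finset.sum_singleton]
      have m0 : myc 0 = 1 := by simp [myc]
      have m1 : myc 1 = 1/4 := by simp [myc]
      have mm : myc (-1) = 1/4 := by norm_num [myc]
      have e0 : ((0:ℤ):ℂ)*θ*Complex.I = 0 := by push_cast; ring
      have e1 : ((1:ℤ):ℂ)*θ*Complex.I = (θ:ℂ)*Complex.I := by push_cast; ring
      have e2 : ((-1:ℤ):ℂ)*θ*Complex.I = -((θ:ℂ)*Complex.I) := by push_cast; ring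
      rw [m0, m1, mm, e0, e1, e2, Complex.exp_zero, Complex.cos]
      ring
    rw [hsum_SS, sub_add_cancel]
    exact fourier_hasSum h1.le h2
  have hfun : (fun k : {k : ℤ // k ∉ SS} => myc k * Complex.exp (((k:ℤ):ℂ)*θ*Complex.I))
      = fun k : {k : ℤ // k ∉ SS} =>
        Complex.exp (((k:ℤ):ℂ)*θ*Complex.I)/(1 - ((k:ℤ):ℂ)^2) := by
    funext k
    obtain ⟨k, hk⟩ := k
    simp only [Finset.mem_insert, Finset.mem_singleton, not_or] at hk
    obtain ⟨h0, hone, hmone⟩ := hk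
    simp only [myc, if_neg h0]
    rw [if_neg (by simp [hone, hmone] : ¬(k = 1 ∨ k = -1))]
    ring
  rw [hfun] at hf2
  have hA : (∑' p, w p) = (((π:ℝ):ℂ)-θ)*Complex.sin θ - (1 + (1/2)*Complex.cos (θ:ℂ)) :=
    hk_fiber.unique hf2
  -- swap and sum over r
  have hswap : HasSum (w ∘ (Equiv.prodComm ℕ {k : ℤ // k ∉ SS})) (∑' p, w p) :=
    ((Equiv.prodComm ℕ {k : ℤ // k ∉ SS}).hasSum_iff).mpr hwsum.hasSum
  have hr := HasSum.prod_fiberwise hswap (fun r => T_hasSum r θ)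
  rwa [hA] at hr

lemma main_norm_summable {θ : ℝ} :
    Summable (fun r : ℕ => ‖(-1:ℂ)^(r+2) * Bern (2*(r+1)) θ + 2*Complex.cos (θ:ℂ)‖) := by
  have hswapnorm : Summable (fun p : ℕ × {k : ℤ // k ∉ SS} => ‖-(vv p.1 θ (p.2:ℤ))‖) := by
    have := prod_norm_summable θ
    exact ((Equiv.prodComm ℕ {k : ℤ // k ∉ SS}).summable_iff).mpr this
  have hpair := (summable_prod_of_nonneg (fun p => norm_nonneg _)).mp hswapnorm
  apply Summable.of_nonneg_of_le (fun r => norm_nonneg _) _ hpair.2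
  intro r
  rw [← (T_hasSum r θ).tsum_eq]
  exact norm_tsum_le_tsum_norm (hpair.1 r)

/-- `B_1(θ)sin θ = 1 + (1/2)cos θ + Σ_{r≥1} ((−1)^{r+1} B_{2r}(θ) + 2 cos θ)` for `θ ≠ 0`
on `𝕋`, with absolute convergence of the series. -/
theorem quasiBernoulli_K2_series (θ : ℝ) (h1 : 0 < θ) (h2 : θ < 2 * Real.pi) :
    Summable (fun r : ℕ =>
      ‖(-1 : ℂ) ^ (r + 2) * Bern (2 * (r + 1)) θ + 2 * (Real.cos θ : ℂ)‖) ∧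
    Bern 1 θ * (Real.sin θ : ℂ) =
      1 + (1 / 2) * (Real.cos θ : ℂ) +
        ∑' r : ℕ, ((-1 : ℂ) ^ (r + 2) * Bern (2 * (r + 1)) θ + 2 * (Real.cos θ : ℂ)) := by
  have hmain := main_hasSum h1 h2
  have hnorm := main_norm_summable (θ := θ)
  constructor
  · simpa only [Complex.ofReal_cos] using hnorm
  · have hB1 : Bern 1 θ = ((π:ℝ):ℂ) - θ := by
      rw [Bern, if_pos rfl]
      have hfloor : ⌊θ / (2*π)⌋ = 0 := by
        rw [Int.floor_eq_zero_iff]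
        constructor
        · positivity
        · rw [div_lt_one (by positivity)]
          exact h2
      rw [hfloor]
      push_cast
      ring
    simp only [Complex.ofReal_cos, Complex.ofReal_sin]
    rw [hB1, hmain.tsum_eq]
    ring
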